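/- If p is confluent and τ-inert, then bisimilar derivatives stay bisimilar after matching weak moves: whenever p₁ ≈ p₂ are derivatives of p, p₁ ⟹α p₃, and p₂ ⟹α p₄, then p₃ ≈ p₄. -/
import Mathlib


/-- Reflexive-transitive closure of τ-steps. -/
def TauStar {P A : Type} (step : P → A → P → Prop) (τ : A) : P → P → Prop :=
  Relation.ReflTransGen (fun p q => step p τ q)

/-- Weak step: τ*-closure for τ, and τ* ∘ step α ∘ τ* otherwise. -/
def Weak {P A : Type} (step : P → A → P → Prop) (τ : A) (α : A) (p q : P) : Prop :=
  (α = τ ∧ TauStar step τ p q) ∨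
  (α ≠ τ ∧ ∃ a b, TauStar step τ p a ∧ step a α b ∧ TauStar step τ b q)

/-- Labelled bisimulation: symmetric, strong challenge, weak response. -/
def IsBisim {P A : Type} (step : P → A → P → Prop) (τ : A) (R : P → P → Prop) : Prop :=
  Symmetric R ∧
  ∀ p q α p', R p q → step p α p' → ∃ q', Weak step τ α q q' ∧ R p' q'

/-- Weak bisimilarity: the union of all bisimulations. -/
def Bisim {P A : Type} (step : P → A → P → Prop) (τ : A) (p q : P) : Prop :=
  ∃ R, IsBisim step τ R ∧ R p q

/-- A derivative: reachable by finitely many weak steps. -/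
def Deriv {P A : Type} (step : P → A → P → Prop) (τ : A) : P → P → Prop :=
  Relation.ReflTransGen (fun a b => ∃ α, Weak step τ α a b)

/-- Confluence: all compatible weak steps from any derivative can be closed
up to residuals and bisimilarity. -/
def Confluent {P A : Type} (step : P → A → P → Prop) (τ : A)
    (compat : A → A → Prop) (res : A → A → A) (p : P) : Prop :=
  ∀ q, Deriv step τ p q → ∀ α β q₁ q₂, compat α β →
    Weak step τ α q q₁ → Weak step τ β q q₂ →
    ∃ q₃ q₄, Weak step τ (res β α) q₁ q₃ ∧ Weak step τ (res α β) q₂ q₄ ∧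
      Bisim step τ q₃ q₄

section Aux
variable {P A : Type} (step : P → A → P → Prop) (τ : A)

lemma weak_tau_iff {p q : P} : Weak step τ τ p q ↔ TauStar step τ p q := by
  constructor
  · rintro (⟨_, h⟩ | ⟨h, _⟩)
    · exact h
    · exact absurd rfl h
  · intro h; exact Or.inl ⟨rfl, h⟩

lemma weak_tau_left {p q r : P} (h : TauStar step τ p q) (h' : Weak step τ α q r) :
    Weak step τ α p r := by
  rcases h' with ⟨hα, h'⟩ | ⟨hα, a, b, h1, h2, h3⟩
  · exact Or.inl ⟨hα, h.trans h'⟩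
  · exact Or.inr ⟨hα, a, b, h.trans h1, h2, h3⟩

lemma weak_tau_right {p q r : P} (h : Weak step τ α p q) (h' : TauStar step τ q r) :
    Weak step τ α p r := by
  rcases h with ⟨hα, h⟩ | ⟨hα, a, b, h1, h2, h3⟩
  · exact Or.inl ⟨hα, h.trans h'⟩
  · exact Or.inr ⟨hα, a, b, h1, h2, h3.trans h'⟩

lemma bisim_match_tauStar {R : P → P → Prop} (hR : IsBisim step τ R)
    {p p' : P} (h : TauStar step τ p p') :
    ∀ q, R p q → ∃ q', TauStar step τ q q' ∧ R p' q' := by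
  induction h with
  | refl => exact fun q hq => ⟨q, Relation.ReflTransGen.refl, hq⟩
  | tail _ hstep ih =>
      intro q hq
      obtain ⟨q', hq', hR'⟩ := ih q hq
      obtain ⟨q'', hw, hR''⟩ := hR.2 _ _ _ _ hR' hstep
      exact ⟨q'', hq'.trans ((weak_tau_iff step τ).1 hw), hR''⟩

lemma bisim_match_weak {R : P → P → Prop} (hR : IsBisim step τ R)
    {α : A} {p p' q : P} (h : Weak step τ α p p') (hq : R p q) :
    ∃ q', Weak step τ α q q' ∧ R p' q' := by
  rcases h with ⟨hα, h⟩ | ⟨hα, a, b, h1, h2, h3⟩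
  · obtain ⟨q', h', hR'⟩ := bisim_match_tauStar step τ hR h q hq
    exact ⟨q', Or.inl ⟨hα, h'⟩, hR'⟩
  · obtain ⟨qa, hqa, hRa⟩ := bisim_match_tauStar step τ hR h1 q hq
    obtain ⟨qb, hqb, hRb⟩ := hR.2 _ _ _ _ hRa h2
    obtain ⟨q', hq', hR'⟩ := bisim_match_tauStar step τ hR h3 qb hRb
    exact ⟨q', weak_tau_right step τ (weak_tau_left step τ hqa hqb) hq', hR'⟩

lemma Bisim.symm' {p q : P} (h : Bisim step τ p q) : Bisim step τ q p := by
  obtain ⟨R, hR, hpq⟩ := h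
  exact ⟨R, hR, hR.1 hpq⟩

lemma Bisim.trans' {p q r : P} (h : Bisim step τ p q) (h' : Bisim step τ q r) :
    Bisim step τ p r := by
  obtain ⟨R₁, hR₁, h1⟩ := h
  obtain ⟨R₂, hR₂, h2⟩ := h'
  refine ⟨fun x z => (∃ y, R₁ x y ∧ R₂ y z) ∨ (∃ y, R₂ x y ∧ R₁ y z),
    ⟨?_, ?_⟩, Or.inl ⟨q, h1, h2⟩⟩
  · rintro x z (⟨y, hxy, hyz⟩ | ⟨y, hxy, hyz⟩)
    · exact Or.inr ⟨y, hR₂.1 hyz, hR₁.1 hxy⟩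
    · exact Or.inl ⟨y, hR₁.1 hyz, hR₂.1 hxy⟩
  · rintro x z α x' (⟨y, hxy, hyz⟩ | ⟨y, hxy, hyz⟩) hstep
    · obtain ⟨y', hwy, hRy⟩ := hR₁.2 _ _ _ _ hxy hstep
      obtain ⟨z', hwz, hRz⟩ := bisim_match_weak step τ hR₂ hwy hyz
      exact ⟨z', hwz, Or.inl ⟨y', hRy, hRz⟩⟩
    · obtain ⟨y', hwy, hRy⟩ := hR₂.2 _ _ _ _ hxy hstep
      obtain ⟨z', hwz, hRz⟩ := bisim_match_weak step τ hR₁ hwy hyz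
      exact ⟨z', hwz, Or.inr ⟨y', hRy, hRz⟩⟩

end Aux

/-- For a confluent, τ-inert process, bisimilar derivatives stay bisimilar
after matching weak moves. -/
theorem bisim_preserved_after_matching_moves {P A : Type}
    (step : P → A → P → Prop) (τ : A)
    (compat : A → A → Prop) (res : A → A → A)
    (hrefl : ∀ α, compat α α)
    (hres_self : ∀ α, res α α = τ)
    (p : P)
    (hconf : Confluent step τ compat res p)
    (hinert : ∀ q q', Deriv step τ p q → Weak step τ τ q q' → Bisim step τ q q') :
    ∀ α p₁ p₂ p₃ p₄, Deriv step τ p p₁ → Deriv step τ p p₂ →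
      Bisim step τ p₁ p₂ → Weak step τ α p₁ p₃ → Weak step τ α p₂ p₄ →
      Bisim step τ p₃ p₄ := by
  intro α p₁ p₂ p₃ p₄ hd₁ hd₂ hb h₁₃ h₂₄
  obtain ⟨R, hR, hpq⟩ := hb
  obtain ⟨p₅, h₂₅, hR₃₅⟩ := bisim_match_weak step τ hR h₁₃ hpq
  have hb₃₅ : Bisim step τ p₃ p₅ := ⟨R, hR, hR₃₅⟩
  obtain ⟨q₃, q₄, hw₅, hw₄, hb₃₄⟩ :=
    hconf p₂ hd₂ α α p₅ p₄ (hrefl α) h₂₅ h₂₄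
  rw [hres_self] at hw₅ hw₄
  have hd₅ : Deriv step τ p p₅ := hd₂.tail ⟨α, h₂₅⟩
  have hd₄ : Deriv step τ p p₄ := hd₂.tail ⟨α, h₂₄⟩
  have h1 := hinert p₅ q₃ hd₅ hw₅
  have h2 := hinert p₄ q₄ hd₄ hw₄
  exact ((hb₃₅.trans' step τ h1).trans' step τ hb₃₄).trans' step τ (h2.symm' step τ)
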